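/- Let v be a vertex, T a vertex set not containing v, and S₁, S₂ minimum v–T separators with R(v,S₁) ⊆ R(v,S₂) in a finite graph. If u ∈ R[v,S₂] := R(v,S₂) ∪ S₂, then there is a v–u path contained in R[v,S₂] that is internally vertex-disjoint from S₂ and contains at most one vertex of S₁. -/

import Mathlib

open SimpleGraph

/-- `b` is reachable from `a` by a walk avoiding `S`. -/
def ReachAvoid {W : Type} (G : SimpleGraph W) (S : Set W) (a b : W) : Prop :=
  ∃ p : G.Walk a b, ∀ x ∈ p.support, x ∉ S

/-- `R(X,S)`: the set of vertices reachable from `X` in `G - S`. -/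
def RSet {W : Type} (G : SimpleGraph W) (X S : Set W) : Set W :=
  {b | ∃ a ∈ X, ReachAvoid G S a b}

/-- `S` is an `X`–`Y` separator: disjoint from `X ∪ Y` and hitting every
`X`–`Y` path. -/
def IsSep {W : Type} (G : SimpleGraph W) (X Y S : Set W) : Prop :=
  (∀ s ∈ S, s ∉ X ∪ Y) ∧ ∀ x ∈ X, ∀ y ∈ Y, ¬ ReachAvoid G S x y

lemma reach_mem {W : Type} [DecidableEq W] {G : SimpleGraph W} {S : Set W} {v b : W}
    (p : G.Walk v b) (hp : ∀ x ∈ p.support, x ∉ S) :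
    ∀ x ∈ p.support, x ∈ RSet G {v} S := by
  intro x hx
  exact ⟨v, Set.mem_singleton v, p.takeUntil x hx,
    fun y hy => hp y (p.support_takeUntil_subset hx hy)⟩

lemma mem_RSet_not_mem {W : Type} {G : SimpleGraph W} {S : Set W} {v x : W}
    (h : x ∈ RSet G {v} S) : x ∉ S := by
  obtain ⟨a, -, p, hp⟩ := h
  exact hp x p.end_mem_support

lemma self_mem_RSet {W : Type} {G : SimpleGraph W} {S : Set W} {v : W}
    (h : v ∉ S) : v ∈ RSet G {v} S :=
  ⟨v, Set.mem_singleton v, Walk.nil, by simpa using h⟩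

lemma mem_RSet_of_adj {W : Type} {G : SimpleGraph W} {S : Set W} {v a b : W}
    (h : a ∈ RSet G {v} S) (hab : G.Adj a b) (hb : b ∉ S) : b ∈ RSet G {v} S := by
  obtain ⟨c, hc, p, hp⟩ := h
  refine ⟨c, hc, p.concat hab, ?_⟩
  intro x hx
  rw [Walk.support_concat, List.mem_append] at hx
  rcases hx with hx | hx
  · exact hp x hx
  · simp only [List.mem_singleton] at hx
    exact hx ▸ hb

lemma exists_walk_to_sep {W : Type} [Fintype W] [DecidableEq W]
    {G : SimpleGraph W} {v : W} {T S : Set W}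
    (hS : IsSep G {v} T S)
    (hmin : ∀ S' : Set W, IsSep G {v} T S' → S.ncard ≤ S'.ncard)
    {s : W} (hs : s ∈ S) :
    ∃ p : G.Walk v s, (∀ x ∈ p.support, x ∈ S → x = s) ∧
      (∀ x ∈ p.support, x ≠ s → x ∈ RSet G {v} S) := by
  have hnot : ¬ IsSep G {v} T (S \ {s}) := by
    intro h
    have h1 := hmin _ h
    have hlt : (S \ {s}).ncard < S.ncard :=
      Set.ncard_diff_singleton_lt_of_mem hs (Set.toFinite S)
    omega
  rw [IsSep] at hnot
  push_neg at hnot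
  obtain ⟨x, hx, t, ht, hr⟩ := hnot (fun x hx => hS.1 x hx.1)
  rw [Set.mem_singleton_iff] at hx
  subst hx
  obtain ⟨q, hq⟩ := hr
  have hsq : s ∈ q.support := by
    by_contra hns
    refine hS.2 x (Set.mem_singleton x) t ht ⟨q, fun y hy hyS => hns ?_⟩
    have h2 := hq y hy
    have hys : y = s := by
      by_contra hne
      exact h2 ⟨hyS, fun h => hne h⟩
    exact hys ▸ hy
  have prop1 : ∀ y ∈ (q.takeUntil s hsq).support, y ∈ S → y = s := by
    intro y hy hyS
    by_contra hne
    exact hq y (q.support_takeUntil_subset hsq hy) ⟨hyS, fun h => hne h⟩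
  refine ⟨q.takeUntil s hsq, prop1, ?_⟩
  intro y hy hne
  set p := q.takeUntil s hsq with hp
  have hcount : p.support.count s = 1 := q.count_support_takeUntil_eq_one hsq
  have hsplit := p.take_spec hy
  have hcnt2 : p.support.count s =
      (p.takeUntil y hy).support.count s + ((p.dropUntil y hy).support.tail).count s := by
    conv_lhs => rw [← hsplit]
    rw [Walk.support_append, List.count_append]
  have hsd : s ∈ (p.dropUntil y hy).support.tail := by
    have hend : s ∈ (p.dropUntil y hy).support := Walk.end_mem_support _
    rw [(p.dropUntil y hy).support_eq_cons, List.mem_cons] at hend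
    rcases hend with h | h
    · exact absurd h.symm hne
    · exact h
  have hge : 0 < ((p.dropUntil y hy).support.tail).count s := List.count_pos_iff.mpr hsd
  have hzero : (p.takeUntil y hy).support.count s = 0 := by omega
  have hns : s ∉ (p.takeUntil y hy).support := List.count_eq_zero.mp hzero
  refine ⟨x, Set.mem_singleton x, p.takeUntil y hy, fun z hz hzS => ?_⟩
  exact hns ((prop1 z (p.support_takeUntil_subset hy hz) hzS) ▸ hz)

lemma last_in_set {W : Type} {G : SimpleGraph W} (A : Set W) {a b : W} (p : G.Walk a b) :
    ∃ (s : W) (q : G.Walk s b), (∀ x ∈ q.support, x ∈ p.support) ∧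
      (∀ x ∈ q.support, x ≠ s → x ∉ A) ∧ (s ∈ A ∨ s = a) := by
  induction p with
  | nil =>
    exact ⟨_, Walk.nil, fun x hx => hx,
      fun x hx hne => absurd (by simpa using hx) hne, Or.inr rfl⟩
  | @cons a c b h p' ih =>
    obtain ⟨s, q, hsub, havoid, hcase⟩ := ih
    rcases hcase with hsA | rfl
    · exact ⟨s, q, fun x hx => List.mem_cons_of_mem _ (hsub x hx), havoid, Or.inl hsA⟩
    · by_cases hcA : s ∈ A
      · exact ⟨s, q, fun x hx => List.mem_cons_of_mem _ (hsub x hx), havoid, Or.inl hcA⟩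
      · refine ⟨a, Walk.cons h q, ?_, ?_, Or.inr rfl⟩
        · intro x hx
          rw [Walk.support_cons, List.mem_cons] at hx ⊢
          rcases hx with hx | hx
          · exact Or.inl hx
          · exact Or.inr (hsub x hx)
        · intro x hx hne
          rw [Walk.support_cons, List.mem_cons] at hx
          rcases hx with hx | hx
          · exact absurd hx hne
          · by_cases hxs : x = s
            · exact hxs ▸ hcA
            · exact havoid x hx hxs

theorem path_avoiding_separators {W : Type} [Fintype W] [DecidableEq W]
    (G : SimpleGraph W) (v : W) (T : Set W) (hvT : v ∉ T)
    (S₁ S₂ : Set W)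
    (hS₁ : IsSep G {v} T S₁) (hS₂ : IsSep G {v} T S₂)
    (hS₁min : ∀ S : Set W, IsSep G {v} T S → S₁.ncard ≤ S.ncard)
    (hS₂min : ∀ S : Set W, IsSep G {v} T S → S₂.ncard ≤ S.ncard)
    (hcov : RSet G {v} S₁ ⊆ RSet G {v} S₂)
    (u : W) (hu : u ∈ RSet G {v} S₂ ∪ S₂) :
    ∃ p : G.Walk v u, p.IsPath ∧
      (∀ x ∈ p.support, x ∈ RSet G {v} S₂ ∪ S₂) ∧
      (∀ x ∈ p.support, x ∈ S₂ → x = u) ∧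
      (∀ a ∈ p.support, ∀ b ∈ p.support, a ∈ S₁ → b ∈ S₁ → a = b) := by
  have hv1 : v ∉ S₁ := fun h => hS₁.1 v h (Or.inl (Set.mem_singleton v))
  have hv2 : v ∉ S₂ := fun h => hS₂.1 v h (Or.inl (Set.mem_singleton v))
  -- Step 1: a walk from v to u meeting S₂ only possibly at u, with all other
  -- vertices in RSet G {v} S₂.
  obtain ⟨Wk, H1, H2⟩ : ∃ Wk : G.Walk v u, (∀ x ∈ Wk.support, x ∈ S₂ → x = u) ∧
      (∀ x ∈ Wk.support, x ≠ u → x ∈ RSet G {v} S₂) := by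
    rcases hu with hu | hu
    · obtain ⟨a, ha, q, hq⟩ := hu
      rw [Set.mem_singleton_iff] at ha
      subst ha
      exact ⟨q, fun x hx hxS => absurd hxS (hq x hx),
        fun x hx _ => reach_mem q hq x hx⟩
    · obtain ⟨q, h1, h2⟩ := exists_walk_to_sep hS₂ hS₂min hu
      exact ⟨q, h1, h2⟩
  -- Step 2: last vertex of Wk in R[v,S₁]
  obtain ⟨s, q, hsub, havoid, hcase⟩ := last_in_set (RSet G {v} S₁ ∪ S₁) Wk
  have hsA : s ∈ RSet G {v} S₁ ∪ S₁ := by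
    rcases hcase with h | rfl
    · exact h
    · exact Or.inl (self_mem_RSet hv1)
  rcases hsA with hsR | hsS
  · -- s is reachable avoiding S₁; then q must be nil, so u ∈ RSet G {v} S₁
    have huR : u ∈ RSet G {v} S₁ := by
      cases q with
      | nil => exact hsR
      | @cons _ c _ h' q' =>
        exfalso
        have hc : c ∈ (Walk.cons h' q').support :=
          List.mem_cons_of_mem _ q'.start_mem_support
        have hcs : c ≠ s := h'.ne'
        have hcA : c ∉ RSet G {v} S₁ ∪ S₁ := havoid c hc hcs
        by_cases hc1 : c ∈ S₁
        · exact hcA (Or.inr hc1)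
        · exact hcA (Or.inl (mem_RSet_of_adj hsR h' hc1))
    obtain ⟨a, ha, P, hP⟩ := huR
    rw [Set.mem_singleton_iff] at ha
    subst ha
    refine ⟨P.toPath, P.toPath.2, ?_, ?_, ?_⟩
    · intro x hx
      have hx' := P.support_toPath_subset hx
      exact Or.inl (hcov (reach_mem P hP x hx'))
    · intro x hx hxS
      have hx' := P.support_toPath_subset hx
      exact absurd hxS (mem_RSet_not_mem (hcov (reach_mem P hP x hx')))
    · intro a ha' b hb' haS hbS
      exact absurd haS (hP a (P.support_toPath_subset ha'))
  · -- s ∈ S₁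
    have hsW : s ∈ Wk.support := hsub s q.start_mem_support
    obtain ⟨P, HP1, HP2⟩ := exists_walk_to_sep hS₁ hS₁min hsS
    have key : ∀ x ∈ (P.append q).support,
        (x ∈ RSet G {v} S₂ ∪ S₂) ∧ (x ∈ S₂ → x = u) ∧ (x ∈ S₁ → x = s) := by
      intro x hx
      rw [Walk.mem_support_append_iff] at hx
      rcases hx with hx | hx
      · by_cases hxs : x = s
        · subst hxs
          refine ⟨?_, fun hxS => H1 x hsW hxS, fun _ => rfl⟩
          by_cases hxu : x = u
          · exact hxu ▸ hu
          · exact Or.inl (H2 x hsW hxu)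
        · have hxR : x ∈ RSet G {v} S₁ := HP2 x hx hxs
          exact ⟨Or.inl (hcov hxR),
            fun hxS => absurd hxS (mem_RSet_not_mem (hcov hxR)),
            fun hxS => absurd hxS (mem_RSet_not_mem hxR)⟩
      · have hxW : x ∈ Wk.support := hsub x hx
        refine ⟨?_, H1 x hxW, ?_⟩
        · by_cases hxu : x = u
          · exact hxu ▸ hu
          · exact Or.inl (H2 x hxW hxu)
        · intro hxS
          by_contra hne
          exact havoid x hx hne (Or.inr hxS)
    refine ⟨(P.append q).toPath, (P.append q).toPath.2, ?_, ?_, ?_⟩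
    · intro x hx
      exact (key x ((P.append q).support_toPath_subset hx)).1
    · intro x hx
      exact (key x ((P.append q).support_toPath_subset hx)).2.1
    · intro a ha' b hb' haS hbS
      have h1 := (key a ((P.append q).support_toPath_subset ha')).2.2 haS
      have h2 := (key b ((P.append q).support_toPath_subset hb')).2.2 hbS
      rw [h1, h2]
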